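/- Let A be an n×n real symmetric matrix with eigenvalues λ_1 ≥ ⋯ ≥ λ_n and orthonormal eigenvectors u_1, …, u_n, let E be an n×n real symmetric matrix, let 1 ≤ k < n with δ_k := λ_k − λ_{k+1} > 0 and λ_k + λ_{k+1} ≥ 0, set a_0 := λ_k − δ_k/2, and let T ≥ δ_k. Let 1 ≤ r₁ ≤ n and x₁ := max_{1≤i,j≤r₁} |u_iᵀ E u_j|. Then ∫_{−T}^{T} ‖ Σ_{1≤i,j≤r₁} ((a_0 + it)/((a_0 + it − λ_i)(a_0 + it − λ_j))) · u_i u_iᵀ E u_j u_jᵀ ‖ dt ≤ r₁² x₁ · ( 2π a_0/δ_k + 2 log(3T/δ_k) ). -/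

import Mathlib

open Matrix Real

/-- The spectral norm (operator norm induced by the Euclidean norm) of a complex matrix. -/
noncomputable def specNormC {n : ℕ} (M : Matrix (Fin n) (Fin n) ℂ) : ℝ :=
  ‖Matrix.toEuclideanCLM (𝕜 := ℂ) M‖

section Aux

lemma stmt15_block_eq {n : ℕ} (v w : Fin n → ℝ) (E : Matrix (Fin n) (Fin n) ℝ) :
    Matrix.vecMulVec v v * E * Matrix.vecMulVec w w = (v ⬝ᵥ E.mulVec w) • Matrix.vecMulVec v w := by
  ext a b
  simp only [Matrix.mul_apply, Matrix.vecMulVec_apply, Matrix.smul_apply, Matrix.mulVec,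
    dotProduct, smul_eq_mul, Finset.sum_mul, Finset.mul_sum]
  rw [Finset.sum_comm]
  apply Finset.sum_congr rfl; intro d _
  apply Finset.sum_congr rfl; intro e _
  ring

lemma stmt15_rankOne_norm_le {n : ℕ} (v w : Fin n → ℝ) (hv : v ⬝ᵥ v = 1) (hw : w ⬝ᵥ w = 1) :
    ‖Matrix.toEuclideanCLM (𝕜 := ℂ) ((Matrix.vecMulVec v w).map Complex.ofReal)‖ ≤ 1 := by
  apply ContinuousLinearMap.opNorm_le_bound _ zero_le_one
  intro x
  set vE : EuclideanSpace ℂ (Fin n) := (WithLp.equiv 2 _).symm (fun a => (v a : ℂ)) with hvE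
  set wE : EuclideanSpace ℂ (Fin n) := (WithLp.equiv 2 _).symm (fun a => (w a : ℂ)) with hwE
  have happ : Matrix.toEuclideanCLM (𝕜 := ℂ) ((Matrix.vecMulVec v w).map Complex.ofReal) x
      = (inner ℂ wE x : ℂ) • vE := by
    apply (WithLp.equiv 2 _).injective
    ext a
    simp only [WithLp.equiv_apply, Matrix.ofLp_toEuclideanCLM, Matrix.toLin'_apply, Matrix.mulVec,
      dotProduct, Matrix.map_apply, Matrix.vecMulVec_apply]
    simp only [WithLp.ofLp_smul, WithLp.equiv_symm_apply, Pi.smul_apply, smul_eq_mul, hvE]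
    rw [PiLp.inner_apply]
    simp only [WithLp.equiv_symm_apply, RCLike.inner_apply, starRingEnd_apply, hwE]
    rw [Finset.sum_mul]
    apply Finset.sum_congr rfl; intro b _
    simp [Complex.conj_ofReal]
    ring
  rw [happ, norm_smul]
  have hnv : ‖vE‖ = 1 := by
    rw [EuclideanSpace.norm_eq]
    have : ∀ a, ‖((WithLp.equiv 2 _).symm (fun a => (v a : ℂ)) : EuclideanSpace ℂ (Fin n)) a‖ = |v a| := by
      intro a; simp [WithLp.equiv_symm_apply, Complex.norm_real]
    simp only [hvE, this]
    rw [show (∑ a, |v a| ^ 2) = v ⬝ᵥ v by simp [dotProduct, sq_abs, sq]]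
    rw [hv, Real.sqrt_one]
  have hnw : ‖wE‖ = 1 := by
    rw [EuclideanSpace.norm_eq]
    have : ∀ a, ‖((WithLp.equiv 2 _).symm (fun a => (w a : ℂ)) : EuclideanSpace ℂ (Fin n)) a‖ = |w a| := by
      intro a; simp [WithLp.equiv_symm_apply, Complex.norm_real]
    simp only [hwE, this]
    rw [show (∑ a, |w a| ^ 2) = w ⬝ᵥ w by simp [dotProduct, sq_abs, sq]]
    rw [hw, Real.sqrt_one]
  calc ‖(inner ℂ wE x : ℂ)‖ * ‖vE‖ ≤ (‖wE‖ * ‖x‖) * 1 := by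
        rw [hnv]; exact mul_le_mul_of_nonneg_right (norm_inner_le_norm _ _) zero_le_one
    _ = 1 * ‖x‖ := by rw [hnw]; ring

lemma stmt15_coeff_bound (a₀ c t lami lamj : ℝ) (hc : 0 < c) (ha₀ : 0 ≤ a₀)
    (hi : c ≤ |a₀ - lami|) (hj : c ≤ |a₀ - lamj|) :
    ‖(((a₀ : ℂ) + (t : ℂ) * Complex.I) /
        ((((a₀ : ℂ) + (t : ℂ) * Complex.I) - (lami : ℂ)) *
          (((a₀ : ℂ) + (t : ℂ) * Complex.I) - (lamj : ℂ))))‖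
      ≤ (a₀ + |t|) / (c^2 + t^2) := by
  have habs : ∀ lam : ℝ, c ≤ |a₀ - lam| →
      Real.sqrt (c^2+t^2) ≤ ‖((a₀ : ℂ) + (t : ℂ) * Complex.I) - (lam : ℂ)‖ := by
    intro lam hlam
    rw [Complex.norm_def, Complex.normSq_apply]
    have hre : ((a₀ : ℂ) + (t : ℂ) * Complex.I - (lam : ℂ)).re = a₀ - lam := by simp
    have him : ((a₀ : ℂ) + (t : ℂ) * Complex.I - (lam : ℂ)).im = t := by simp
    rw [hre, him]
    apply Real.sqrt_le_sqrt
    nlinarith [abs_nonneg (a₀ - lam), sq_abs (a₀ - lam), hc.le]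
  have hnum : ‖((a₀ : ℂ) + (t : ℂ) * Complex.I)‖ ≤ a₀ + |t| := by
    calc ‖((a₀ : ℂ) + (t : ℂ) * Complex.I)‖ ≤ ‖(a₀:ℂ)‖ + ‖(t:ℂ)*Complex.I‖ := norm_add_le _ _
      _ = a₀ + |t| := by simp [abs_of_nonneg ha₀]
  have hden : c^2 + t^2 ≤ ‖(((a₀ : ℂ) + (t : ℂ) * Complex.I) - (lami : ℂ)) *
      (((a₀ : ℂ) + (t : ℂ) * Complex.I) - (lamj : ℂ))‖ := by
    rw [norm_mul]
    have hs : Real.sqrt (c^2+t^2) * Real.sqrt (c^2+t^2) = c^2+t^2 :=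
      Real.mul_self_sqrt (by positivity)
    calc c^2+t^2 = Real.sqrt (c^2+t^2) * Real.sqrt (c^2+t^2) := hs.symm
      _ ≤ _ := mul_le_mul (habs _ hi) (habs _ hj) (Real.sqrt_nonneg _) (norm_nonneg _)
  rw [norm_div]
  exact div_le_div₀ (by positivity) hnum (by positivity) hden

lemma stmt15_hasDeriv_aux (a₀ c : ℝ) (hc : 0 < c) (t : ℝ) :
    HasDerivAt (fun s => (a₀/c) * Real.arctan (s/c) + Real.log (c^2+s^2) / 2)
      ((a₀ + t)/(c^2+t^2)) t := by
  have h1 : HasDerivAt (fun s : ℝ => s / c) (1/c) t :=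
    (hasDerivAt_id t).div_const c |>.congr_deriv (by ring)
  have h2 : HasDerivAt (fun s => Real.arctan (s/c)) ((1 / (1 + (t/c)^2)) * (1/c)) t :=
    by have := (Real.hasDerivAt_arctan (t/c)).comp t h1; exact this
  have h3 : HasDerivAt (fun s => (a₀/c) * Real.arctan (s/c))
      ((a₀/c) * ((1 / (1 + (t/c)^2)) * (1/c))) t := h2.const_mul _
  have h4 : HasDerivAt (fun s : ℝ => c^2 + s^2) (2*t) t := by
    simpa using ((hasDerivAt_pow 2 t).const_add (c^2))
  have h5 : 0 < c^2 + t^2 := by positivity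
  have h6 : HasDerivAt (fun s => Real.log (c^2+s^2)) ((c^2+t^2)⁻¹ * (2*t)) t :=
    by have := (Real.hasDerivAt_log h5.ne').comp t h4; exact this
  have h7 := h3.fun_add (h6.div_const 2)
  refine h7.congr_deriv ?_
  field_simp

lemma stmt15_cont_aux (a₀ c : ℝ) (hc : 0 < c) :
    Continuous (fun t : ℝ => (a₀+|t|)/(c^2+t^2)) := by
  apply Continuous.div (by continuity) (by continuity)
  intro t; positivity

lemma stmt15_integral_aux (a₀ c T : ℝ) (hc : 0 < c) (hT : 0 ≤ T) :
    ∫ t in (-T)..T, (a₀+|t|)/(c^2+t^2)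
      = 2*((a₀/c) * Real.arctan (T/c)) + (Real.log (c^2+T^2) - Real.log (c^2)) := by
  have hcont := stmt15_cont_aux a₀ c hc
  have hint : ∀ b₁ b₂ : ℝ, IntervalIntegrable (fun t : ℝ => (a₀+|t|)/(c^2+t^2))
      MeasureTheory.volume b₁ b₂ := fun b₁ b₂ => hcont.intervalIntegrable b₁ b₂
  have hsplit : ∫ t in (-T)..T, (a₀+|t|)/(c^2+t^2)
      = (∫ t in (-T)..(0:ℝ), (a₀+|t|)/(c^2+t^2)) + ∫ t in (0:ℝ)..T, (a₀+|t|)/(c^2+t^2) :=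
    (intervalIntegral.integral_add_adjacent_intervals (hint _ _) (hint _ _)).symm
  have hneg : (∫ t in (-T)..(0:ℝ), (a₀+|t|)/(c^2+t^2)) = ∫ t in (0:ℝ)..T, (a₀+|t|)/(c^2+t^2) := by
    rw [show (0:ℝ) = -0 by ring, ← intervalIntegral.integral_comp_neg (fun t => (a₀+|t|)/(c^2+t^2))]
    simp
  have hpos : (∫ t in (0:ℝ)..T, (a₀+|t|)/(c^2+t^2)) = ∫ t in (0:ℝ)..T, (a₀+t)/(c^2+t^2) := by
    apply intervalIntegral.integral_congr
    intro t ht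
    rw [Set.uIcc_of_le hT] at ht
    simp only []
    rw [abs_of_nonneg ht.1]
  have hFTC : (∫ t in (0:ℝ)..T, (a₀+t)/(c^2+t^2))
      = ((a₀/c) * Real.arctan (T/c) + Real.log (c^2+T^2) / 2)
        - ((a₀/c) * Real.arctan (0/c) + Real.log (c^2+0^2) / 2) := by
    apply intervalIntegral.integral_eq_sub_of_hasDerivAt
    · intro t _; exact stmt15_hasDeriv_aux a₀ c hc t
    · apply Continuous.intervalIntegrable
      apply Continuous.div (by continuity) (by continuity)
      intro t; positivity
  rw [hsplit, hneg, hpos, hFTC]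
  simp [Real.arctan_zero]
  ring

lemma stmt15_card_aux {n r : ℕ} (hr : r ≤ n) :
    (Finset.univ.filter fun i : Fin n => (i:ℕ) < r).card = r := by
  have : (Finset.univ.filter fun i : Fin n => (i:ℕ) < r) =
      Finset.map (Fin.castLEEmb hr) Finset.univ := by
    ext i
    simp only [Finset.mem_filter, Finset.mem_univ, true_and, Finset.mem_map]
    constructor
    · intro h
      exact ⟨⟨i, h⟩, by ext; simp [Fin.castLEEmb, Fin.castLE]⟩
    · rintro ⟨j, rfl⟩
      simpa [Fin.castLEEmb, Fin.castLE] using j.isLt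
  rw [this, Finset.card_map, Finset.card_univ, Fintype.card_fin]

lemma stmt15_map_real_smul {n : ℕ} (r : ℝ) (M : Matrix (Fin n) (Fin n) ℝ) :
    (r • M).map Complex.ofReal = (r : ℂ) • M.map Complex.ofReal := by
  ext a b; simp

end Aux

set_option maxHeartbeats 1000000 in
set_option synthInstance.maxHeartbeats 400000 in
/-- Integral of the top-block interaction term along the left vertical
segment: with `a₀ = λ_k − δ_k/2` (the midpoint of `λ_k, λ_{k+1}`), `T ≥ δ_k`, and
`x₁ = max_{1≤i,j≤r₁} |uᵢᵀ E uⱼ|`,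
`∫_{−T}^{T} ‖Σ_{i,j≤r₁} (z/((z−λᵢ)(z−λⱼ))) uᵢuᵢᵀ E uⱼuⱼᵀ‖ dt
  ≤ r₁² x₁ (2π a₀/δ_k + 2 log(3T/δ_k))` where `z = a₀ + it`.
Indices are 1-based in the informal statement; `lam ⟨i-1, _⟩` is `λ_i`. -/
theorem stmt15 (n k : ℕ) (hk : 1 ≤ k) (hkn : k < n)
    (A E : Matrix (Fin n) (Fin n) ℝ)
    (hA : A.IsSymm) (hE : E.IsSymm)
    -- spectral data of `A`
    (lam : Fin n → ℝ) (u : Fin n → (Fin n → ℝ))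
    (hlam : ∀ i j : Fin n, i ≤ j → lam j ≤ lam i)
    (hu : ∀ i j : Fin n, u i ⬝ᵥ u j = if i = j then (1 : ℝ) else 0)
    (heig : ∀ i, A.mulVec (u i) = lam i • u i)
    -- the eigengap `δ_k` and midpoint `a₀`
    (δk : ℝ) (hδdef : δk = lam ⟨k - 1, by omega⟩ - lam ⟨k, hkn⟩)
    (hδpos : 0 < δk)
    (hsum : 0 ≤ lam ⟨k - 1, by omega⟩ + lam ⟨k, hkn⟩)
    (a₀ : ℝ) (ha₀ : a₀ = lam ⟨k - 1, by omega⟩ - δk / 2)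
    (T : ℝ) (hT : δk ≤ T)
    -- `r₁` and the interaction maximum `x₁`
    (r₁ : ℕ) (hr₁1 : 1 ≤ r₁) (hr₁n : r₁ ≤ n)
    (x₁ : ℝ)
    (hx₁_ub : ∀ i j : Fin n, (i : ℕ) < r₁ → (j : ℕ) < r₁ → |u i ⬝ᵥ E.mulVec (u j)| ≤ x₁)
    (hx₁_mem : ∃ i j : Fin n, (i : ℕ) < r₁ ∧ (j : ℕ) < r₁ ∧ |u i ⬝ᵥ E.mulVec (u j)| = x₁) :
    (∫ t in (-T)..T,
        specNormC
          (∑ i ∈ Finset.univ.filter (fun i : Fin n => (i : ℕ) < r₁),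
            ∑ j ∈ Finset.univ.filter (fun j : Fin n => (j : ℕ) < r₁),
              (((a₀ : ℂ) + (t : ℂ) * Complex.I) /
                  ((((a₀ : ℂ) + (t : ℂ) * Complex.I) - (lam i : ℂ)) *
                    (((a₀ : ℂ) + (t : ℂ) * Complex.I) - (lam j : ℂ)))) •
                ((vecMulVec (u i) (u i) * E * vecMulVec (u j) (u j)).map
                  (Complex.ofReal)))) ≤
      (r₁ : ℝ) ^ 2 * x₁ * (2 * π * a₀ / δk + 2 * Real.log (3 * T / δk)) := by
  set c : ℝ := δk / 2 with hc_def
  have hc : 0 < c := by positivity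
  have ha₀nn : 0 ≤ a₀ := by rw [ha₀, hc_def, hδdef]; linarith
  have hx₁nn : 0 ≤ x₁ := by
    obtain ⟨i, j, _, _, h⟩ := hx₁_mem; rw [← h]; exact abs_nonneg _
  have hTpos : 0 < T := lt_of_lt_of_le hδpos hT
  set ik1 : Fin n := ⟨k - 1, by omega⟩ with hik1
  set ik : Fin n := ⟨k, hkn⟩ with hik
  -- the gap bound
  have hgap : ∀ i : Fin n, c ≤ |a₀ - lam i| := by
    intro i
    rcases lt_or_ge (i : ℕ) k with h | h
    · have hle : i ≤ ik1 := by
        rw [Fin.le_def]; simp only [hik1]; omega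
      have h1 := hlam i ik1 hle
      have h2 := le_abs_self (lam i - a₀)
      rw [abs_sub_comm]
      have e1 : a₀ = lam ik1 - c := ha₀
      linarith
    · have hle : ik ≤ i := by rw [Fin.le_def]; simp only [hik]; omega
      have h1 := hlam ik i hle
      have h2 := le_abs_self (a₀ - lam i)
      have e1 : a₀ = lam ik1 - c := ha₀
      have e2 : δk = lam ik1 - lam ik := hδdef
      have e3 : c = δk / 2 := hc_def
      linarith
  -- abbreviations
  set s₁ : Finset (Fin n) := Finset.univ.filter (fun i : Fin n => (i : ℕ) < r₁) with hs₁
  have hcard : s₁.card = r₁ := stmt15_card_aux hr₁n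
  have hmem : ∀ i : Fin n, i ∈ s₁ → (i : ℕ) < r₁ := by
    intro i hi; rw [hs₁, Finset.mem_filter] at hi; exact hi.2
  set coeff : Fin n → Fin n → ℝ → ℂ := fun i j t =>
    (((a₀ : ℂ) + (t : ℂ) * Complex.I) /
      ((((a₀ : ℂ) + (t : ℂ) * Complex.I) - (lam i : ℂ)) *
        (((a₀ : ℂ) + (t : ℂ) * Complex.I) - (lam j : ℂ)))) with hcoeff
  set Fc : Fin n → Fin n → (EuclideanSpace ℂ (Fin n) →L[ℂ] EuclideanSpace ℂ (Fin n)) :=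
    fun i j => Matrix.toEuclideanCLM (𝕜 := ℂ)
      ((vecMulVec (u i) (u i) * E * vecMulVec (u j) (u j)).map Complex.ofReal) with hFc
  -- the integrand rewritten as a norm of a CLM-valued sum
  have hfun : ∀ t : ℝ,
      specNormC (∑ i ∈ s₁, ∑ j ∈ s₁,
        coeff i j t • ((vecMulVec (u i) (u i) * E * vecMulVec (u j) (u j)).map Complex.ofReal))
      = ‖∑ i ∈ s₁, ∑ j ∈ s₁, coeff i j t • Fc i j‖ := by
    intro t
    unfold specNormC
    rw [map_sum]
    congr 1
    apply Finset.sum_congr rfl; intro i _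
    rw [map_sum]
    apply Finset.sum_congr rfl; intro j _
    rw [_root_.map_smul]
  -- norm bound for each Fc
  have hFc_le : ∀ i j : Fin n, i ∈ s₁ → j ∈ s₁ → ‖Fc i j‖ ≤ x₁ := by
    intro i j hi hj
    have hblock := stmt15_block_eq (u i) (u j) E
    have hui : u i ⬝ᵥ u i = 1 := by rw [hu i i]; simp
    have huj : u j ⬝ᵥ u j = 1 := by rw [hu j j]; simp
    rw [hFc]
    simp only []
    rw [hblock, stmt15_map_real_smul, _root_.map_smul]
    refine (ContinuousLinearMap.opNorm_smul_le _ _).trans ?_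
    calc ‖((u i ⬝ᵥ E.mulVec (u j) : ℝ) : ℂ)‖ *
          ‖Matrix.toEuclideanCLM (𝕜 := ℂ) ((vecMulVec (u i) (u j)).map Complex.ofReal)‖
        ≤ x₁ * 1 := by
          apply mul_le_mul _ (stmt15_rankOne_norm_le _ _ hui huj) (norm_nonneg _) hx₁nn
          rw [Complex.norm_real]
          exact hx₁_ub i j (hmem i hi) (hmem j hj)
      _ = x₁ := mul_one x₁
  -- pointwise bound
  have hpt : ∀ t : ℝ, ‖∑ i ∈ s₁, ∑ j ∈ s₁, coeff i j t • Fc i j‖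
      ≤ (r₁ : ℝ)^2 * x₁ * ((a₀ + |t|)/(c^2 + t^2)) := by
    intro t
    have hB : (0:ℝ) ≤ (a₀ + |t|)/(c^2 + t^2) := by positivity
    calc ‖∑ i ∈ s₁, ∑ j ∈ s₁, coeff i j t • Fc i j‖
        ≤ ∑ i ∈ s₁, ∑ j ∈ s₁, ‖coeff i j t • Fc i j‖ := by
          refine (norm_sum_le _ _).trans (Finset.sum_le_sum fun i _ => norm_sum_le _ _)
      _ ≤ ∑ i ∈ s₁, ∑ j ∈ s₁, ((a₀ + |t|)/(c^2 + t^2)) * x₁ := by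
          apply Finset.sum_le_sum; intro i hi
          apply Finset.sum_le_sum; intro j hj
          refine (ContinuousLinearMap.opNorm_smul_le _ _).trans ?_
          exact mul_le_mul (stmt15_coeff_bound a₀ c t (lam i) (lam j) hc ha₀nn (hgap i) (hgap j))
            (hFc_le i j hi hj) (norm_nonneg _) hB
      _ = (r₁ : ℝ)^2 * x₁ * ((a₀ + |t|)/(c^2 + t^2)) := by
          rw [Finset.sum_const, Finset.sum_const, hcard, nsmul_eq_mul, nsmul_eq_mul]
          ring
  -- continuity of the CLM-valued integrand
  have hzcont : Continuous fun t : ℝ => (a₀ : ℂ) + (t : ℂ) * Complex.I := by continuity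
  have hne : ∀ (i : Fin n) (t : ℝ), ((a₀ : ℂ) + (t : ℂ) * Complex.I) - (lam i : ℂ) ≠ 0 := by
    intro i t h
    have hre : a₀ - lam i = 0 := by
      have := congrArg Complex.re h
      simpa using this
    have hg := hgap i
    rw [hre] at hg
    simp at hg
    linarith
  have hcont_f : Continuous fun t : ℝ => ∑ i ∈ s₁, ∑ j ∈ s₁, coeff i j t • Fc i j := by
    apply continuous_finset_sum; intro i _
    apply continuous_finset_sum; intro j _
    apply Continuous.fun_smul _ continuous_const
    exact hzcont.div (((hzcont.sub continuous_const)).mul (hzcont.sub continuous_const))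
      (fun t => mul_ne_zero (hne i t) (hne j t))
  -- the comparison of integrals
  have hg_cont : Continuous (fun t : ℝ => (r₁ : ℝ)^2 * x₁ * ((a₀ + |t|)/(c^2 + t^2))) :=
    continuous_const.mul (stmt15_cont_aux a₀ c hc)
  have hmono : (∫ t in (-T)..T, ‖∑ i ∈ s₁, ∑ j ∈ s₁, coeff i j t • Fc i j‖)
      ≤ ∫ t in (-T)..T, (r₁ : ℝ)^2 * x₁ * ((a₀ + |t|)/(c^2 + t^2)) := by
    apply intervalIntegral.integral_mono_on (by linarith)
    · exact (hcont_f.norm).intervalIntegrable _ _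
    · exact hg_cont.intervalIntegrable _ _
    · intro t _; exact hpt t
  -- compute / bound the RHS integral
  have hval : (∫ t in (-T)..T, (r₁ : ℝ)^2 * x₁ * ((a₀ + |t|)/(c^2 + t^2)))
      = (r₁ : ℝ)^2 * x₁ * (2*((a₀/c) * Real.arctan (T/c)) +
          (Real.log (c^2+T^2) - Real.log (c^2))) := by
    rw [intervalIntegral.integral_const_mul, stmt15_integral_aux a₀ c T hc hTpos.le]
  have harith : 2*((a₀/c) * Real.arctan (T/c)) + (Real.log (c^2+T^2) - Real.log (c^2))
      ≤ 2 * π * a₀ / δk + 2 * Real.log (3 * T / δk) := by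
    have h1 : 2*((a₀/c) * Real.arctan (T/c)) ≤ 2 * π * a₀ / δk := by
      have harc : Real.arctan (T/c) ≤ π/2 := (Real.arctan_lt_pi_div_two _).le
      have h2 : 2*((a₀/c) * Real.arctan (T/c)) ≤ 2*((a₀/c) * (π/2)) := by
        have : 0 ≤ a₀ / c := by positivity
        nlinarith
      calc 2*((a₀/c) * Real.arctan (T/c)) ≤ 2*((a₀/c) * (π/2)) := h2
        _ = 2 * π * a₀ / δk := by rw [hc_def]; field_simp
    have h2 : Real.log (c^2+T^2) - Real.log (c^2) ≤ 2 * Real.log (3 * T / δk) := by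
      rw [← Real.log_div (by positivity) (by positivity)]
      have h3 : (3 * T / δk) ^ 2 = (3*T/δk)^2 := rfl
      rw [show 2 * Real.log (3 * T / δk) = Real.log ((3*T/δk)^2) by
        rw [Real.log_pow]; push_cast; ring]
      apply Real.log_le_log (by positivity)
      rw [div_le_iff₀ (by positivity), hc_def]
      have hT2 : δk ≤ T := hT
      field_simp
      nlinarith [sq_nonneg T, sq_nonneg δk, hδpos, hT2, hTpos]
    linarith
  -- assemble
  calc (∫ t in (-T)..T,
        specNormC (∑ i ∈ s₁, ∑ j ∈ s₁,
          coeff i j t • ((vecMulVec (u i) (u i) * E * vecMulVec (u j) (u j)).map Complex.ofReal)))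
      = ∫ t in (-T)..T, ‖∑ i ∈ s₁, ∑ j ∈ s₁, coeff i j t • Fc i j‖ := by
        apply intervalIntegral.integral_congr; intro t _; exact hfun t
    _ ≤ ∫ t in (-T)..T, (r₁ : ℝ)^2 * x₁ * ((a₀ + |t|)/(c^2 + t^2)) := hmono
    _ = (r₁ : ℝ)^2 * x₁ * (2*((a₀/c) * Real.arctan (T/c)) +
          (Real.log (c^2+T^2) - Real.log (c^2))) := hval
    _ ≤ (r₁ : ℝ) ^ 2 * x₁ * (2 * π * a₀ / δk + 2 * Real.log (3 * T / δk)) := by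
        apply mul_le_mul_of_nonneg_left harith (by positivity)
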